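/- Let t ≥ 0 and let G be a simple graph containing no t+2 pairwise vertex-disjoint triangles. Let M be a family of t+1 pairwise vertex-disjoint triangles in G, let D be the induced subgraph of G on the vertices not covered by M, let 𝓜 be a matching in D, and let A be the set of triangles of M that contain a vertex friendly in G with at least two distinct edges of 𝓜, with a = |A|. Then the number of edges of G inside V(A) satisfies e(G[V(A)]) ≤ C(3a,2) − 2·C(a,2), and the number of edges of G inside V(M) satisfies e(G[V(M)]) ≤ C(3(t+1),2) − 2·C(a,2). -/

import Mathlib

open Finset


/-- `G` contains `k` pairwise vertex-disjoint triangles. -/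
def HasIndepTriangles {V : Type*} (G : SimpleGraph V) (k : ℕ) : Prop :=
  ∃ f : Fin k → Fin 3 → V,
    Function.Injective (fun p : Fin k × Fin 3 => f p.1 p.2) ∧
    ∀ i, G.Adj (f i 0) (f i 1) ∧ G.Adj (f i 1) (f i 2) ∧ G.Adj (f i 0) (f i 2)

/-- The vertex `w` is friendly with the edge `e`: it is adjacent to both endpoints. -/
def Friendly {V : Type*} (G : SimpleGraph V) (w : V) (e : Sym2 V) : Prop :=
  ∀ x ∈ e, G.Adj w x

/-- `F` is a matching of the subgraph of `G` induced on `S`. -/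
def IsMatchingOn {V : Type*} (G : SimpleGraph V) (S : Set V) (F : Finset (Sym2 V)) : Prop :=
  (∀ e ∈ F, e ∈ G.edgeSet ∧ ∀ x ∈ e, x ∈ S) ∧
  ((F : Set (Sym2 V)).Pairwise fun e f => ∀ v, v ∈ e → v ∉ f)

lemma aux_arith (a : ℕ) : a * a - a = 2 * a.choose 2 := by
  rcases a with _ | m
  · simp
  · rw [Nat.choose_two_right]
    have h2 : 2 ∣ (m + 1) * ((m + 1) - 1) := by
      simpa [Nat.mul_comm] using (Nat.even_mul_succ_self m).two_dvd
    rw [Nat.mul_div_cancel' h2]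
    rw [Nat.succ_sub_one, Nat.mul_succ, Nat.add_sub_cancel]

lemma count_aux {V : Type*} [Fintype V] [DecidableEq V] (G : SimpleGraph V)
    (S : Finset V) (N : Finset (Sym2 V))
    (hN : ∀ e ∈ N, e ∉ G.edgeSet ∧ ∃ x ∈ S, ∃ y ∈ S, x ≠ y ∧ e = s(x, y)) :
    Set.ncard {e | e ∈ G.edgeSet ∧ ∀ x ∈ e, x ∈ S} ≤ S.card.choose 2 - N.card := by
  classical
  set Ω : Finset (Sym2 V) := S.offDiag.image Sym2.mk.uncurry with hΩ
  have hΩcard : Ω.card = S.card.choose 2 := Sym2.card_image_offDiag S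
  have hNsub : N ⊆ Ω := by
    intro e he
    obtain ⟨-, x, hx, y, hy, hxy, rfl⟩ := hN e he
    exact mem_image.2 ⟨(x, y), mem_offDiag.2 ⟨hx, hy, hxy⟩, rfl⟩
  have hfin : {e | e ∈ G.edgeSet ∧ ∀ x ∈ e, x ∈ S}.Finite := Set.toFinite _
  have hsub : {e | e ∈ G.edgeSet ∧ ∀ x ∈ e, x ∈ S} ⊆ ↑(Ω \ N) := by
    rintro e ⟨hedge, hmem⟩
    simp only [coe_sdiff, Set.mem_diff, mem_coe]
    constructor
    · induction e using Sym2.ind with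
      | _ x y =>
        have hadj : G.Adj x y := hedge
        exact mem_image.2 ⟨(x, y), mem_offDiag.2
          ⟨hmem x (Sym2.mem_mk_left x y), hmem y (Sym2.mem_mk_right x y), hadj.ne⟩, rfl⟩
    · intro heN
      exact (hN e heN).1 hedge
  calc Set.ncard {e | e ∈ G.edgeSet ∧ ∀ x ∈ e, x ∈ S}
      ≤ (Ω \ N).card := by
        exact (Set.ncard_le_ncard hsub (Ω \ N).finite_toSet).trans_eq (Set.ncard_coe_finset _)
    _ = S.card.choose 2 - N.card := by rw [card_sdiff_of_subset hNsub, hΩcard]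

lemma two_nonedges {V : Type*} [Fintype V] [DecidableEq V] (t : ℕ)
    (G : SimpleGraph V) (hG : ¬ HasIndepTriangles G (t + 2))
    (f : Fin (t + 1) → Fin 3 → V)
    (hinj : Function.Injective fun p : Fin (t + 1) × Fin 3 => f p.1 p.2)
    (htri : ∀ i, G.Adj (f i 0) (f i 1) ∧ G.Adj (f i 1) (f i 2) ∧ G.Adj (f i 0) (f i 2))
    (Dset : Set V) (hDset : Dset = {x | ∀ i j, f i j ≠ x})
    (F : Finset (Sym2 V)) (hF : IsMatchingOn G Dset F)
    (A : Finset (Fin (t + 1)))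
    (hA : ∀ i, i ∈ A ↔ ∃ j : Fin 3, ∃ e₁ ∈ F, ∃ e₂ ∈ F,
      e₁ ≠ e₂ ∧ Friendly G (f i j) e₁ ∧ Friendly G (f i j) e₂)
    (i j : Fin (t + 1)) (hi : i ∈ A) (hj : j ∈ A) (hij : i ≠ j) :
    ∃ p q : Fin 3 × Fin 3, p ≠ q ∧ ¬ G.Adj (f i p.1) (f j p.2) ∧
      ¬ G.Adj (f i q.1) (f j q.2) := by
  classical
  by_contra hcon
  push_neg at hcon
  -- at most one "bad" (non-adjacent) cross pair
  have H : ∀ p q : Fin 3 × Fin 3, ¬ G.Adj (f i p.1) (f j p.2) →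
      ¬ G.Adj (f i q.1) (f j q.2) → p = q := by
    intro p q hp hq
    by_contra hne
    exact hq (hcon p q hne hp)
  have key : ∀ x y : Fin 3 × Fin 3, x ≠ y →
      G.Adj (f i x.1) (f j x.2) ∨ G.Adj (f i y.1) (f j y.2) := by
    intro x y hxy
    by_contra h
    push_neg at h
    exact hxy (H x y h.1 h.2)
  have tadj : ∀ k : Fin (t + 1), ∀ a b : Fin 3, a ≠ b → G.Adj (f k a) (f k b) := by
    intro k a b hab
    obtain ⟨h01, h12, h02⟩ := htri k
    fin_cases a <;> fin_cases b <;>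
      first
        | exact absurd rfl hab
        | exact h01 | exact h01.symm | exact h12 | exact h12.symm
        | exact h02 | exact h02.symm
  obtain ⟨c1, e1, he1, e2, he2, hee, hw1, hw1'⟩ := (hA i).1 hi
  obtain ⟨c2, d1, hd1, d2, hd2, hdd, hw2, hw2'⟩ := (hA j).1 hj
  have hot : ∀ a : Fin 3, ∃ b c : Fin 3, b ≠ a ∧ c ≠ a ∧ b ≠ c := by decide
  obtain ⟨k1, k2, hk1, hk2, hk12⟩ := hot c1
  obtain ⟨l1, l2, hl1, hl2, hl12⟩ := hot c2
  -- find a vertex of triangle i (other than f i c1) adjacent to both f j l1 and f j l2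
  have hKex : ∃ K : Fin 3, K ≠ c1 ∧ G.Adj (f i K) (f j l1) ∧ G.Adj (f i K) (f j l2) := by
    by_cases hb1 : G.Adj (f i k1) (f j l1)
    · by_cases hb2 : G.Adj (f i k1) (f j l2)
      · exact ⟨k1, hk1, hb1, hb2⟩
      · refine ⟨k2, hk2, ?_, ?_⟩
        · exact (key ((k2, l1)) ((k1, l2))
            (fun h => hk12 (congrArg Prod.fst h).symm)).resolve_right hb2
        · exact (key ((k2, l2)) ((k1, l2))
            (fun h => hk12 (congrArg Prod.fst h).symm)).resolve_right hb2
    · refine ⟨k2, hk2, ?_, ?_⟩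
      · exact (key ((k2, l1)) ((k1, l1))
          (fun h => hk12 (congrArg Prod.fst h).symm)).resolve_right hb1
      · exact (key ((k2, l2)) ((k1, l1))
          (fun h => hk12 (congrArg Prod.fst h).symm)).resolve_right hb1
  obtain ⟨K, hKc1, hKl1, hKl2⟩ := hKex
  -- pick distinct matching edges g1 (friendly with f i c1) and g2 (friendly with f j c2)
  have hgex : ∃ g1 g2 : Sym2 V, g1 ∈ F ∧ g2 ∈ F ∧ g1 ≠ g2 ∧
      Friendly G (f i c1) g1 ∧ Friendly G (f j c2) g2 := by
    by_cases h : e1 = d1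
    · exact ⟨e1, d2, he1, hd2, h ▸ hdd, hw1, hw2'⟩
    · exact ⟨e1, d1, he1, hd1, h, hw1, hw2⟩
  obtain ⟨g1, g2, hg1F, hg2F, hgg, hfr1, hfr2⟩ := hgex
  have decomp : ∀ e : Sym2 V, ∃ x y, e = s(x, y) :=
    fun e => Sym2.ind (fun x y => ⟨x, y, rfl⟩) e
  obtain ⟨x1, y1, rfl⟩ := decomp g1
  obtain ⟨x2, y2, rfl⟩ := decomp g2
  have hadj1 : G.Adj x1 y1 := (G.mem_edgeSet).mp (hF.1 _ hg1F).1
  have hadj2 : G.Adj x2 y2 := (G.mem_edgeSet).mp (hF.1 _ hg2F).1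
  have hx1D : x1 ∈ Dset := (hF.1 _ hg1F).2 x1 (Sym2.mem_mk_left _ _)
  have hy1D : y1 ∈ Dset := (hF.1 _ hg1F).2 y1 (Sym2.mem_mk_right _ _)
  have hx2D : x2 ∈ Dset := (hF.1 _ hg2F).2 x2 (Sym2.mem_mk_left _ _)
  have hy2D : y2 ∈ Dset := (hF.1 _ hg2F).2 y2 (Sym2.mem_mk_right _ _)
  have hwx1 : G.Adj (f i c1) x1 := hfr1 x1 (Sym2.mem_mk_left _ _)
  have hwy1 : G.Adj (f i c1) y1 := hfr1 y1 (Sym2.mem_mk_right _ _)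
  have hwx2 : G.Adj (f j c2) x2 := hfr2 x2 (Sym2.mem_mk_left _ _)
  have hwy2 : G.Adj (f j c2) y2 := hfr2 y2 (Sym2.mem_mk_right _ _)
  have hdisj12 : ∀ v, v ∈ s(x1, y1) → v ∉ s(x2, y2) :=
    hF.2 (Finset.mem_coe.mpr hg1F) (Finset.mem_coe.mpr hg2F) hgg
  have hx1x2 : x1 ≠ x2 := fun h => hdisj12 x1 (Sym2.mem_mk_left _ _)
    (by rw [h]; exact Sym2.mem_mk_left _ _)
  have hx1y2 : x1 ≠ y2 := fun h => hdisj12 x1 (Sym2.mem_mk_left _ _)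
    (by rw [h]; exact Sym2.mem_mk_right _ _)
  have hy1x2 : y1 ≠ x2 := fun h => hdisj12 y1 (Sym2.mem_mk_right _ _)
    (by rw [h]; exact Sym2.mem_mk_left _ _)
  have hy1y2 : y1 ≠ y2 := fun h => hdisj12 y1 (Sym2.mem_mk_right _ _)
    (by rw [h]; exact Sym2.mem_mk_right _ _)
  have hD : ∀ x, x ∈ Dset → ∀ k c, f k c ≠ x := by
    rw [hDset]; exact fun x hx => hx
  -- ∀-form inequalities for simp
  have hx1M : ∀ k c, f k c ≠ x1 := hD x1 hx1D
  have hy1M : ∀ k c, f k c ≠ y1 := hD y1 hy1D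
  have hx2M : ∀ k c, f k c ≠ x2 := hD x2 hx2D
  have hy2M : ∀ k c, f k c ≠ y2 := hD y2 hy2D
  have hx1M' : ∀ k c, x1 ≠ f k c := fun k c => (hx1M k c).symm
  have hy1M' : ∀ k c, y1 ≠ f k c := fun k c => (hy1M k c).symm
  have hx2M' : ∀ k c, x2 ≠ f k c := fun k c => (hx2M k c).symm
  have hy2M' : ∀ k c, y2 ≠ f k c := fun k c => (hy2M k c).symm
  -- M-vertex distinctness
  have hfne : ∀ (a b : Fin (t+1)) (u v : Fin 3), (a, u) ≠ (b, v) → f a u ≠ f b v :=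
    fun a b u v hne h => hne (hinj h)
  have n1 : f i c1 ≠ f i K := hfne _ _ _ _ (by simp [hKc1.symm, Prod.ext_iff])
  have n2 : f i c1 ≠ f j c2 := hfne _ _ _ _ (by simp [hij, Prod.ext_iff])
  have n3 : f i c1 ≠ f j l1 := hfne _ _ _ _ (by simp [hij, Prod.ext_iff])
  have n4 : f i c1 ≠ f j l2 := hfne _ _ _ _ (by simp [hij, Prod.ext_iff])
  have n5 : f i K ≠ f j c2 := hfne _ _ _ _ (by simp [hij, Prod.ext_iff])
  have n6 : f i K ≠ f j l1 := hfne _ _ _ _ (by simp [hij, Prod.ext_iff])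
  have n7 : f i K ≠ f j l2 := hfne _ _ _ _ (by simp [hij, Prod.ext_iff])
  have n8 : f j c2 ≠ f j l1 := hfne _ _ _ _ (by simp [hl1.symm, Prod.ext_iff])
  have n9 : f j c2 ≠ f j l2 := hfne _ _ _ _ (by simp [hl2.symm, Prod.ext_iff])
  have n10 : f j l1 ≠ f j l2 := hfne _ _ _ _ (by simp [hl12, Prod.ext_iff])
  have hx1y1 : x1 ≠ y1 := hadj1.ne
  have hx2y2 : x2 ≠ y2 := hadj2.ne
  -- build t+2 disjoint triangles
  apply hG
  have ht : 1 ≤ t := by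
    rcases Nat.eq_zero_or_pos t with rfl | ht
    · exact absurd (Fin.ext (by omega)) hij
    · exact ht
  set T : Fin 3 → Fin 3 → V :=
    ![![f i c1, x1, y1], ![f j c2, x2, y2], ![f i K, f j l1, f j l2]] with hT
  have hcard : Fintype.card ({k : Fin (t + 1) // k ≠ i ∧ k ≠ j} ⊕ Fin 3) = t + 2 := by
    have h1 : (univ.filter fun k : Fin (t+1) => k ≠ i ∧ k ≠ j) = univ \ {i, j} := by
      ext k; simp [not_or]
    have h2 : Fintype.card {k : Fin (t + 1) // k ≠ i ∧ k ≠ j} = t - 1 := by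
      rw [Fintype.card_subtype, h1, card_sdiff_of_subset (subset_univ _), card_univ, Fintype.card_fin,
        card_insert_of_notMem (by simp [hij]), card_singleton]
      omega
    rw [Fintype.card_sum, h2, Fintype.card_fin]
    omega
  set g' : ({k : Fin (t + 1) // k ≠ i ∧ k ≠ j} ⊕ Fin 3) → Fin 3 → V :=
    Sum.elim (fun k => f k.1) T with hg'
  have hg'inj : Function.Injective
      (fun p : ({k : Fin (t + 1) // k ≠ i ∧ k ≠ j} ⊕ Fin 3) × Fin 3 => g' p.1 p.2) := by
    rintro ⟨s, c⟩ ⟨s', c'⟩ h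
    simp only [hg', hT] at h
    cases s with
    | inl k =>
      cases s' with
      | inl k' =>
        simp only [Sum.elim_inl] at h
        have h2 := hinj (a₁ := (k.1, c)) (a₂ := (k'.1, c')) h
        simp only [Prod.mk.injEq] at h2
        obtain ⟨hk, hc⟩ := h2
        exact Prod.ext (congrArg Sum.inl (Subtype.ext hk)) hc
      | inr r =>
        exfalso
        have hni : ∀ u u', f k.1 u ≠ f i u' := fun u u' hh =>
          k.2.1 (congrArg Prod.fst (hinj (a₁ := (k.1, u)) (a₂ := (i, u')) hh))
        have hnj : ∀ u u', f k.1 u ≠ f j u' := fun u u' hh =>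
          k.2.2 (congrArg Prod.fst (hinj (a₁ := (k.1, u)) (a₂ := (j, u')) hh))
        simp only [Sum.elim_inl, Sum.elim_inr] at h
        fin_cases r <;> fin_cases c' <;>
          simp only [Fin.isValue, Fin.mk_zero, Fin.mk_one, show (⟨2, by omega⟩ : Fin 3) = 2 from rfl,
            Matrix.cons_val_zero, Matrix.cons_val_one, Matrix.cons_val_two,
            Matrix.head_cons, Matrix.tail_cons] at h <;>
          first
            | exact hni _ _ h | exact hnj _ _ h
            | exact hx1M _ _ h | exact hy1M _ _ h | exact hx2M _ _ h | exact hy2M _ _ h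
    | inr r =>
      cases s' with
      | inl k' =>
        exfalso
        have hni : ∀ u u', f i u ≠ f k'.1 u' := fun u u' hh =>
          k'.2.1 (congrArg Prod.fst (hinj (a₁ := (k'.1, u')) (a₂ := (i, u)) hh.symm))
        have hnj : ∀ u u', f j u ≠ f k'.1 u' := fun u u' hh =>
          k'.2.2 (congrArg Prod.fst (hinj (a₁ := (k'.1, u')) (a₂ := (j, u)) hh.symm))
        simp only [Sum.elim_inl, Sum.elim_inr] at h
        fin_cases r <;> fin_cases c <;>
          simp only [Fin.isValue, Fin.mk_zero, Fin.mk_one, show (⟨2, by omega⟩ : Fin 3) = 2 from rfl,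
            Matrix.cons_val_zero, Matrix.cons_val_one, Matrix.cons_val_two,
            Matrix.head_cons, Matrix.tail_cons] at h <;>
          first
            | exact hni _ _ h | exact hnj _ _ h
            | exact hx1M _ _ h.symm | exact hy1M _ _ h.symm
            | exact hx2M _ _ h.symm | exact hy2M _ _ h.symm
      | inr r' =>
        simp only [Sum.elim_inr] at h
        fin_cases r <;> fin_cases r' <;> fin_cases c <;> fin_cases c' <;>
          simp only [Fin.isValue, Fin.mk_zero, Fin.mk_one, show (⟨2, by omega⟩ : Fin 3) = 2 from rfl,
            Matrix.cons_val_zero, Matrix.cons_val_one, Matrix.cons_val_two,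
            Matrix.head_cons, Matrix.tail_cons] at h <;>
          first
            | rfl
            | exact absurd h n1 | exact absurd h.symm n1
            | exact absurd h n2 | exact absurd h.symm n2
            | exact absurd h n3 | exact absurd h.symm n3
            | exact absurd h n4 | exact absurd h.symm n4
            | exact absurd h n5 | exact absurd h.symm n5
            | exact absurd h n6 | exact absurd h.symm n6
            | exact absurd h n7 | exact absurd h.symm n7
            | exact absurd h n8 | exact absurd h.symm n8
            | exact absurd h n9 | exact absurd h.symm n9
            | exact absurd h n10 | exact absurd h.symm n10
            | exact absurd h hx1y1 | exact absurd h.symm hx1y1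
            | exact absurd h hx2y2 | exact absurd h.symm hx2y2
            | exact absurd h hx1x2 | exact absurd h.symm hx1x2
            | exact absurd h hx1y2 | exact absurd h.symm hx1y2
            | exact absurd h hy1x2 | exact absurd h.symm hy1x2
            | exact absurd h hy1y2 | exact absurd h.symm hy1y2
            | exact absurd h (hx1M _ _) | exact absurd h.symm (hx1M _ _)
            | exact absurd h (hy1M _ _) | exact absurd h.symm (hy1M _ _)
            | exact absurd h (hx2M _ _) | exact absurd h.symm (hx2M _ _)
            | exact absurd h (hy2M _ _) | exact absurd h.symm (hy2M _ _)
  have hg'adj : ∀ s, G.Adj (g' s 0) (g' s 1) ∧ G.Adj (g' s 1) (g' s 2) ∧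
      G.Adj (g' s 0) (g' s 2) := by
    intro s
    cases s with
    | inl k => exact htri k.1
    | inr r =>
      simp only [hg', hT, Sum.elim_inr]
      fin_cases r <;>
        refine ⟨?_, ?_, ?_⟩ <;>
        simp only [Fin.isValue, Fin.mk_zero, Fin.mk_one, show (⟨2, by omega⟩ : Fin 3) = 2 from rfl,
          Matrix.cons_val_zero, Matrix.cons_val_one, Matrix.cons_val_two,
          Matrix.head_cons, Matrix.tail_cons] <;>
        first
          | exact hwx1 | exact hadj1 | exact hwy1
          | exact hwx2 | exact hadj2 | exact hwy2
          | exact hKl1 | exact tadj j l1 l2 hl12 | exact hKl2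
  set eqv := (Fintype.equivFinOfCardEq hcard).symm with heqv
  refine ⟨fun m => g' (eqv m), ?_, fun m => hg'adj (eqv m)⟩
  intro p q h
  simp only at h
  have h2 := hg'inj (a₁ := (eqv p.1, p.2)) (a₂ := (eqv q.1, q.2)) h
  simp only [Prod.mk.injEq] at h2
  exact Prod.ext (eqv.injective h2.1) h2.2


/-- With `A` (of size `a`) the set of triangles of `M` containing a vertex friendly with
at least two edges of the matching `F` in `D`:
`e(G[V(A)]) ≤ C(3a,2) - 2C(a,2)` and `e(G[V(M)]) ≤ C(3(t+1),2) - 2C(a,2)`. -/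
theorem edges_inside_A_and_M_bound {V : Type*} [Fintype V] [DecidableEq V] (t : ℕ)
    (G : SimpleGraph V) (hG : ¬ HasIndepTriangles G (t + 2))
    (f : Fin (t + 1) → Fin 3 → V)
    (hinj : Function.Injective fun p : Fin (t + 1) × Fin 3 => f p.1 p.2)
    (htri : ∀ i, G.Adj (f i 0) (f i 1) ∧ G.Adj (f i 1) (f i 2) ∧ G.Adj (f i 0) (f i 2))
    (Dset : Set V) (hDset : Dset = {x | ∀ i j, f i j ≠ x})
    (F : Finset (Sym2 V)) (hF : IsMatchingOn G Dset F)
    (A : Finset (Fin (t + 1)))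
    (hA : ∀ i, i ∈ A ↔ ∃ j : Fin 3, ∃ e₁ ∈ F, ∃ e₂ ∈ F,
      e₁ ≠ e₂ ∧ Friendly G (f i j) e₁ ∧ Friendly G (f i j) e₂) :
    Set.ncard {e | e ∈ G.edgeSet ∧ ∀ x ∈ e, ∃ i ∈ A, ∃ j, f i j = x} ≤
      (3 * A.card).choose 2 - 2 * A.card.choose 2 ∧
    Set.ncard {e | e ∈ G.edgeSet ∧ ∀ x ∈ e, ∃ i, ∃ j, f i j = x} ≤
      (3 * (t + 1)).choose 2 - 2 * A.card.choose 2 := by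
  classical
  have tn : ∀ i j : Fin (t + 1), ∃ p q : Fin 3 × Fin 3,
      (i ∈ A → j ∈ A → i ≠ j → p ≠ q ∧ ¬ G.Adj (f i p.1) (f j p.2) ∧
        ¬ G.Adj (f i q.1) (f j q.2)) := by
    intro i j
    by_cases h : i ∈ A ∧ j ∈ A ∧ i ≠ j
    · obtain ⟨p, q, h1, h2, h3⟩ :=
        two_nonedges t G hG f hinj htri Dset hDset F hF A hA i j h.1 h.2.1 h.2.2
      exact ⟨p, q, fun _ _ _ => ⟨h1, h2, h3⟩⟩
    · exact ⟨(0, 0), (0, 0), fun h1 h2 h3 => absurd ⟨h1, h2, h3⟩ h⟩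
  choose p q hpq using tn
  set n : Fin (t + 1) × Fin (t + 1) → Sym2 V := fun z =>
    if z.1 < z.2 then s(f z.1 (p z.1 z.2).1, f z.2 (p z.1 z.2).2)
    else s(f z.2 (q z.2 z.1).1, f z.1 (q z.2 z.1).2) with hn
  set N := A.offDiag.image n with hNdef
  have hform : ∀ z : Fin (t + 1) × Fin (t + 1), z ∈ A.offDiag → ∃ a b u v,
      a ∈ A ∧ b ∈ A ∧ a < b ∧ n z = s(f a u, f b v) ∧ ¬ G.Adj (f a u) (f b v) ∧
      ((z = (a, b) ∧ (u, v) = p a b) ∨ (z = (b, a) ∧ (u, v) = q a b)) := by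
    rintro ⟨z1, z2⟩ hz
    rw [Finset.mem_offDiag] at hz
    obtain ⟨h1, h2, h12⟩ := hz
    rcases lt_or_gt_of_ne h12 with hlt | hgt
    · refine ⟨z1, z2, (p z1 z2).1, (p z1 z2).2, h1, h2, hlt, ?_, ?_, Or.inl ⟨rfl, rfl⟩⟩
      · simp [hn, hlt]
      · exact (hpq z1 z2 h1 h2 h12).2.1
    · refine ⟨z2, z1, (q z2 z1).1, (q z2 z1).2, h2, h1, hgt, ?_, ?_, Or.inr ⟨rfl, rfl⟩⟩
      · simp [hn, not_lt.mpr hgt.le]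
      · exact (hpq z2 z1 h2 h1 (Ne.symm h12)).2.2
  have symeq : ∀ (a b a' b' : Fin (t + 1)) (u v u' v' : Fin 3),
      s(f a u, f b v) = s(f a' u', f b' v') →
      (a = a' ∧ u = u' ∧ b = b' ∧ v = v') ∨ (a = b' ∧ u = v' ∧ b = a' ∧ v = u') := by
    intro a b a' b' u v u' v' h
    rw [Sym2.eq_iff] at h
    rcases h with ⟨h1, h2⟩ | ⟨h1, h2⟩
    · left
      have e1 := hinj (a₁ := (a, u)) (a₂ := (a', u')) h1
      have e2 := hinj (a₁ := (b, v)) (a₂ := (b', v')) h2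
      simp only [Prod.mk.injEq] at e1 e2
      exact ⟨e1.1, e1.2, e2.1, e2.2⟩
    · right
      have e1 := hinj (a₁ := (a, u)) (a₂ := (b', v')) h1
      have e2 := hinj (a₁ := (b, v)) (a₂ := (a', u')) h2
      simp only [Prod.mk.injEq] at e1 e2
      exact ⟨e1.1, e1.2, e2.1, e2.2⟩
  have hninj : Set.InjOn n A.offDiag := by
    intro z hz z' hz' he
    obtain ⟨a, b, u, v, haA, hbA, hab, hzv, -, hc⟩ := hform z hz
    obtain ⟨a', b', u', v', haA', hbA', hab', hzv', -, hc'⟩ := hform z' hz'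
    rw [hzv, hzv'] at he
    rcases symeq a b a' b' u v u' v' he with ⟨ea, eu, eb, ev⟩ | ⟨ea, eu, eb, ev⟩
    · subst ea; subst eb; subst eu; subst ev
      rcases hc with ⟨rfl, hp⟩ | ⟨rfl, hp⟩ <;> rcases hc' with ⟨rfl, hp'⟩ | ⟨rfl, hp'⟩
      · rfl
      · exact absurd (hp ▸ hp' : p a b = q a b) (hpq a b haA hbA hab.ne).1
      · exact absurd (hp'.symm.trans hp) (hpq a b haA hbA hab.ne).1
      · rfl
    · subst ea; subst eb
      exact absurd (hab.trans hab') (lt_irrefl _)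
  have hNcard : N.card = 2 * A.card.choose 2 := by
    rw [hNdef, Finset.card_image_of_injOn hninj, Finset.offDiag_card, aux_arith]
  have hNgood : ∀ (S : Finset V), (∀ a ∈ A, ∀ u : Fin 3, f a u ∈ S) →
      ∀ e ∈ N, e ∉ G.edgeSet ∧ ∃ x ∈ S, ∃ y ∈ S, x ≠ y ∧ e = s(x, y) := by
    intro S hS e he
    rw [hNdef, Finset.mem_image] at he
    obtain ⟨z, hz, rfl⟩ := he
    obtain ⟨a, b, u, v, haA, hbA, hab, hzv, hnadj, -⟩ := hform z hz
    rw [hzv]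
    refine ⟨fun hmem => hnadj (G.mem_edgeSet.mp hmem), f a u, hS a haA u, f b v, hS b hbA v,
      ?_, rfl⟩
    intro hcontra
    have := hinj (a₁ := (a, u)) (a₂ := (b, v)) hcontra
    simp only [Prod.mk.injEq] at this
    exact hab.ne this.1
  constructor
  · -- V(A) bound
    set S : Finset V := (A ×ˢ (Finset.univ : Finset (Fin 3))).image (fun z => f z.1 z.2)
      with hS
    have hScard : S.card = 3 * A.card := by
      rw [hS, Finset.card_image_of_injOn (hinj.injOn), Finset.card_product, Finset.card_univ,
        Fintype.card_fin, Nat.mul_comm]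
    have hseteq : {e | e ∈ G.edgeSet ∧ ∀ x ∈ e, ∃ i ∈ A, ∃ j, f i j = x} =
        {e | e ∈ G.edgeSet ∧ ∀ x ∈ e, x ∈ S} := by
      ext e
      simp only [Set.mem_setOf_eq, and_congr_right_iff]
      intro _
      refine forall_congr' fun x => forall_congr' fun _ => ?_
      rw [hS, Finset.mem_image]
      constructor
      · rintro ⟨i, hi, j, rfl⟩
        exact ⟨(i, j), Finset.mem_product.mpr ⟨hi, Finset.mem_univ _⟩, rfl⟩
      · rintro ⟨⟨i, j⟩, hij, rfl⟩
        exact ⟨i, (Finset.mem_product.mp hij).1, j, rfl⟩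
    rw [hseteq, ← hScard, ← hNcard]
    exact count_aux G S N (hNgood S fun a ha u =>
      Finset.mem_image.mpr ⟨(a, u), Finset.mem_product.mpr ⟨ha, Finset.mem_univ _⟩, rfl⟩)
  · -- V(M) bound
    set S : Finset V := Finset.univ.image (fun z : Fin (t + 1) × Fin 3 => f z.1 z.2) with hS
    have hScard : S.card = 3 * (t + 1) := by
      rw [hS, Finset.card_image_of_injective _ hinj, Finset.card_univ, Fintype.card_prod,
        Fintype.card_fin, Fintype.card_fin, Nat.mul_comm]
    have hseteq : {e | e ∈ G.edgeSet ∧ ∀ x ∈ e, ∃ i, ∃ j, f i j = x} =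
        {e | e ∈ G.edgeSet ∧ ∀ x ∈ e, x ∈ S} := by
      ext e
      simp only [Set.mem_setOf_eq, and_congr_right_iff]
      intro _
      refine forall_congr' fun x => forall_congr' fun _ => ?_
      rw [hS, Finset.mem_image]
      constructor
      · rintro ⟨i, j, rfl⟩
        exact ⟨(i, j), Finset.mem_univ _, rfl⟩
      · rintro ⟨⟨i, j⟩, -, rfl⟩
        exact ⟨i, j, rfl⟩
    rw [hseteq, ← hScard, ← hNcard]
    exact count_aux G S N (hNgood S fun a _ u => Finset.mem_image.mpr ⟨(a, u),
      Finset.mem_univ _, rfl⟩)
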